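/- Let A ⊆ ℝ^d be a nonempty finite set with mean μ = (1/|A|)∑_{x∈A} x, and let S ⊆ ℝ^d be a nonempty finite set of centers with φ_A(S) ≥ 64·φ_A({μ}). Let T ≥ (7/3)·φ_{{μ}}(S) be any threshold. Then ∑_{x∈A} min{φ_{{x}}(S), T} ≥ φ_A(S)/8. -/
import Mathlib


open Finset

open scoped Classical

/-- `phiPt x S` is the squared distance from `x` to its nearest center in `S`,
i.e. `min_{s ∈ S} ‖x - s‖²`. -/
noncomputable def phiPt {d : ℕ} (x : EuclideanSpace ℝ (Fin d))
    (S : Finset (EuclideanSpace ℝ (Fin d))) : ℝ :=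
  sInf ((fun s => ‖x - s‖ ^ 2) '' (S : Set (EuclideanSpace ℝ (Fin d))))

/-- `phi A S = ∑_{x ∈ A} min_{s ∈ S} ‖x - s‖²`, the `k`-means cost of centers `S` on `A`. -/
noncomputable def phi {d : ℕ} (A S : Finset (EuclideanSpace ℝ (Fin d))) : ℝ :=
  ∑ x ∈ A, phiPt x S

/-- The mean (centroid) of a finite set of points. -/
noncomputable def mean {d : ℕ} (A : Finset (EuclideanSpace ℝ (Fin d))) :
    EuclideanSpace ℝ (Fin d) :=
  (A.card : ℝ)⁻¹ • ∑ x ∈ A, x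

/-- `rho X S z` is the cost of the centers `S` on `X` after discarding the `z`
points of `X` farthest from `S`: the minimum of `phi Y S` over `Y ⊆ X` with
`|Y| = |X| - z`. -/
noncomputable def rho {d : ℕ} (X S : Finset (EuclideanSpace ℝ (Fin d))) (z : ℕ) : ℝ :=
  sInf ((fun Y : Finset (EuclideanSpace ℝ (Fin d)) => phi Y S) ''
    {Y : Finset (EuclideanSpace ℝ (Fin d)) | Y ⊆ X ∧ Y.card = X.card - z})

lemma phiPt_nonneg {d : ℕ} (x : EuclideanSpace ℝ (Fin d))
    (S : Finset (EuclideanSpace ℝ (Fin d))) : 0 ≤ phiPt x S := by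
  rcases Set.eq_empty_or_nonempty ((fun s => ‖x - s‖ ^ 2) '' (S : Set (EuclideanSpace ℝ (Fin d)))) with he | hne
  · simp [phiPt, he, Real.sInf_empty]
  · exact le_csInf hne (by rintro _ ⟨s, -, rfl⟩; positivity)

lemma phiPt_le {d : ℕ} (x s : EuclideanSpace ℝ (Fin d))
    (S : Finset (EuclideanSpace ℝ (Fin d))) (hs : s ∈ S) :
    phiPt x S ≤ ‖x - s‖ ^ 2 := by
  apply csInf_le
  · exact ⟨0, by rintro _ ⟨t, -, rfl⟩; positivity⟩
  · exact ⟨s, hs, rfl⟩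

lemma phiPt_mem {d : ℕ} (x : EuclideanSpace ℝ (Fin d))
    (S : Finset (EuclideanSpace ℝ (Fin d))) (hS : S.Nonempty) :
    ∃ s ∈ S, phiPt x S = ‖x - s‖ ^ 2 := by
  have hne : ((fun s => ‖x - s‖ ^ 2) '' (S : Set (EuclideanSpace ℝ (Fin d)))).Nonempty :=
    (Set.Nonempty.image _ (by exact_mod_cast hS))
  have hfin : ((fun s => ‖x - s‖ ^ 2) '' (S : Set (EuclideanSpace ℝ (Fin d)))).Finite :=
    (S.finite_toSet).image _
  have := hne.csInf_mem hfin
  obtain ⟨s, hs, hval⟩ := this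
  exact ⟨s, hs, hval.symm⟩

lemma phiPt_singleton {d : ℕ} (x m : EuclideanSpace ℝ (Fin d)) :
    phiPt x {m} = ‖x - m‖ ^ 2 := by
  simp [phiPt]

/-- If `φ_A(S) ≥ 64·φ_A({μ})` and `T ≥ (7/3)·φ_{{μ}}(S)`, then
`∑_{x ∈ A} min{φ_{{x}}(S), T} ≥ φ_A(S)/8`. -/
theorem stmt9 {d : ℕ} (A S : Finset (EuclideanSpace ℝ (Fin d)))
    (hA : A.Nonempty) (hS : S.Nonempty)
    (h : phi A S ≥ 64 * phi A {mean A})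
    (T : ℝ) (hT : T ≥ (7 / 3) * phiPt (mean A) S) :
    ∑ x ∈ A, min (phiPt x S) T ≥ phi A S / 8 := by
  set μ := mean A with hμ
  obtain ⟨s, hsS, hsD⟩ := phiPt_mem μ S hS
  have hDnn : 0 ≤ phiPt μ S := phiPt_nonneg μ S
  have hTnn : 0 ≤ T := le_trans (by linarith) hT
  -- per-point bound
  have key : ∀ x ∈ A, min (phiPt x S) T ≥ phiPt x S - 14 * ‖x - μ‖ ^ 2 := by
    intro x hx
    rcases le_or_gt (phiPt x S) T with hle | hlt
    · rw [min_eq_left hle]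
      nlinarith [sq_nonneg ‖x - μ‖]
    · rw [min_eq_right hlt.le]
      have h1 : phiPt x S ≤ ‖x - s‖ ^ 2 := phiPt_le x s S hsS
      have h2 : ‖x - s‖ ≤ ‖x - μ‖ + ‖μ - s‖ := by
        have := norm_add_le (x - μ) (μ - s)
        simpa using this
      have h3 : ‖x - s‖ ^ 2 ≤ 2 * ‖x - μ‖ ^ 2 + 2 * ‖μ - s‖ ^ 2 := by
        nlinarith [norm_nonneg (x - s), norm_nonneg (x - μ), norm_nonneg (μ - s),
          sq_nonneg (‖x - μ‖ - ‖μ - s‖)]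
      -- phiPt x S > T ≥ (7/3) * phiPt μ S = (7/3)‖μ-s‖²
      have h4 : phiPt x S ≤ 2 * ‖x - μ‖ ^ 2 + 2 * phiPt μ S := by
        rw [hsD]; linarith
      nlinarith
  have hsum : ∑ x ∈ A, min (phiPt x S) T ≥
      ∑ x ∈ A, (phiPt x S - 14 * ‖x - μ‖ ^ 2) :=
    Finset.sum_le_sum key
  have hmean : phi A {μ} = ∑ x ∈ A, ‖x - μ‖ ^ 2 := by
    unfold phi
    exact Finset.sum_congr rfl fun x _ => phiPt_singleton x μ
  have hsplit : ∑ x ∈ A, (phiPt x S - 14 * ‖x - μ‖ ^ 2)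
      = phi A S - 14 * phi A {μ} := by
    rw [Finset.sum_sub_distrib, ← Finset.mul_sum, hmean]
    rfl
  have hphinn : 0 ≤ phi A S := Finset.sum_nonneg fun x _ => phiPt_nonneg x S
  rw [hsplit] at hsum
  linarith
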